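/- Let q_{-1} = 0, q_0 = 1, and q_n = c_n·q_{n-1} + q_{n-2} for n ≥ 1 with c_n ∈ ℕ, c_n ≥ 1. Define N_k^A and N_k^B recursively by N_0^A = 1, N_0^B = 0, N_1^A = c_1 - 1, N_1^B = 1, N_{k+1}^A = (c_{k+1}-1)·N_k^A + c_{k+1}·N_k^B, and N_{k+1}^B = c_k·N_{k-1}^A + (c_k+1)·N_{k-1}^B. Then for all k ≥ 0: N_k^A = q_k - q_{k-1} and N_k^B = q_{k-1}. -/
import Mathlib

lemma tvc_key1 (m a b : ℕ) (hm : 1 ≤ m) (hab : a ≤ b) :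
    (m - 1) * (b - a) + m * a = (m * b + a) - b := by
  obtain ⟨m', rfl⟩ := Nat.exists_eq_add_of_le hm
  obtain ⟨d, rfl⟩ := Nat.exists_eq_add_of_le hab
  have h1 : (1 + m') * (a + d) + a = (m' * (a + d) + a) + (a + d) := by ring
  rw [h1, Nat.add_sub_cancel]
  simp [Nat.add_sub_cancel_left]
  ring

lemma tvc_key2 (m a b : ℕ) (hab : a ≤ b) :
    m * (b - a) + (m + 1) * a = m * b + a := by
  obtain ⟨d, rfl⟩ := Nat.exists_eq_add_of_le hab
  simp [Nat.add_sub_cancel_left]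
  ring

/-- Let `q_{-1} = 0`, `q_0 = 1`, and `q_n = c_n·q_{n-1} + q_{n-2}`
for `n ≥ 1` with `c_n ∈ ℕ`, `c_n ≥ 1`. Define `N_k^A` and `N_k^B` recursively by
`N_0^A = 1`, `N_0^B = 0`, `N_1^A = c_1 - 1`, `N_1^B = 1`,
`N_{k+1}^A = (c_{k+1}-1)·N_k^A + c_{k+1}·N_k^B`, and
`N_{k+1}^B = c_k·N_{k-1}^A + (c_k+1)·N_{k-1}^B` (for `k ≥ 1`). Then for all
`k ≥ 0`: `N_k^A = q_k - q_{k-1}` and `N_k^B = q_{k-1}`.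
(Here `q : ℕ → ℕ` is the index-shifted sequence `q k = q_{k-1}`, so that
`q 0 = q_{-1} = 0` and `q (k+1) = q_k`.) -/
theorem tree_vertex_counts
    (c : ℕ → ℕ) (hc : ∀ n : ℕ, 1 ≤ n → 1 ≤ c n)
    (q NA NB : ℕ → ℕ)
    (hq0 : q 0 = 0) (hq1 : q 1 = 1)
    (hqrec : ∀ n : ℕ, q (n + 2) = c (n + 1) * q (n + 1) + q n)
    (hNA0 : NA 0 = 1) (hNB0 : NB 0 = 0)
    (hNA1 : NA 1 = c 1 - 1) (hNB1 : NB 1 = 1)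
    (hNArec : ∀ k : ℕ, NA (k + 1) = (c (k + 1) - 1) * NA k + c (k + 1) * NB k)
    (hNBrec : ∀ k : ℕ, NB (k + 2) = c (k + 1) * NA k + (c (k + 1) + 1) * NB k) :
    ∀ k : ℕ, NA k = q (k + 1) - q k ∧ NB k = q k := by
  have hmono : ∀ k : ℕ, q k ≤ q (k + 1) := by
    intro k
    induction k with
    | zero => omega
    | succ n ih =>
      have hcn := hc (n + 1) (by omega)
      have := hqrec n
      nlinarith
  have key : ∀ k : ℕ, (NA k = q (k + 1) - q k ∧ NB k = q k) ∧
      (NA (k + 1) = q (k + 2) - q (k + 1) ∧ NB (k + 1) = q (k + 1)) := by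
    intro k
    induction k with
    | zero =>
      have h2 : q 2 = c 1 := by rw [hqrec 0, hq1, hq0]; ring
      simp only [zero_add]
      omega
    | succ n ih =>
      obtain ⟨⟨hA0, hB0⟩, hA1, hB1⟩ := ih
      refine ⟨⟨hA1, hB1⟩, ?_, ?_⟩
      · rw [hNArec (n + 1), hA1, hB1, hqrec (n + 1)]
        exact tvc_key1 _ _ _ (hc (n + 2) (by omega)) (hmono (n + 1))
      · rw [hNBrec n, hA0, hB0, hqrec n]
        exact tvc_key2 _ _ _ (hmono n)
  exact fun k => (key k).1
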